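/- Let N ≥ 1 and J ≥ 2 be integers, let τ > 0, let π₀ lie in the interior of the probability simplex in ℝ^N, and for each j ∈ [J] let c^j ∈ ℝ^N with c^j_i ≥ 0 for all i and ‖c^j‖₂ ≤ R. Define f_j(y; z) = ⟨softmax(log π₀ + (z+y)/τ), c^j − y⟩. Let y^{j,(t)} ∈ [0, c^j] (componentwise box) for j ∈ [J] and t = 0, 1, …, T, set Y^{-j,(t)} = Σ_{k≠j} y^{k,(t)}, and assume the exact best-response property: for every j and every t ≥ 1, f_j(y^{j,(t)}; Y^{-j,(t−1)}) ≥ f_j(ȳ; Y^{-j,(t−1)}) for all ȳ ∈ [0, c^j]. Fix reference points y^{j*} ∈ [0, c^j] and set a_t = max_{j∈[J]} ‖y^{j,(t)} − y^{j*}‖₂. Then for every j ∈ [J] and every ȳ ∈ [0, c^j], Σ_{t=1}^T [f_j(ȳ; Y^{-j,(t)}) − f_j(y^{j,(t)}; Y^{-j,(t)})] ≤ 2·(R/τ + 1)·(J−1)·Σ_{t=1}^T (a_t + a_{t−1}). -/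

import Mathlib

open Finset

/-- `softmax(u)_i = exp(u_i) / Σ_j exp(u_j)`. -/
noncomputable def softmax {N : ℕ} (u : Fin N → ℝ) : Fin N → ℝ :=
  fun i => Real.exp (u i) / ∑ j, Real.exp (u j)

/-- Principal's utility `f(y; z) = ⟨softmax(log π₀ + (z+y)/τ), c − y⟩`. -/
noncomputable def util {N : ℕ} (τ : ℝ) (π₀ c : Fin N → ℝ) (y z : Fin N → ℝ) : ℝ :=
  ∑ i, softmax (fun i => Real.log (π₀ i) + (z i + y i) / τ) i * (c i - y i)

lemma nrm_eq {N : ℕ} (v : Fin N → ℝ) :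
    Real.sqrt (∑ i, v i ^ 2) = ‖(WithLp.linearEquiv 2 ℝ (Fin N → ℝ)).symm v‖ := by
  rw [EuclideanSpace.norm_eq]
  congr 1
  refine Finset.sum_congr rfl fun i _ => ?_
  rw [Real.norm_eq_abs, sq_abs]
  rfl

lemma nrm_sum_le {N : ℕ} {ι : Type*} (s : Finset ι) (g : ι → Fin N → ℝ) :
    Real.sqrt (∑ i, (∑ k ∈ s, g k i) ^ 2) ≤ ∑ k ∈ s, Real.sqrt (∑ i, (g k i) ^ 2) := by
  have h1 : (fun i => ∑ k ∈ s, g k i) = ∑ k ∈ s, g k := by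
    funext i; exact (Finset.sum_apply i s g).symm
  calc Real.sqrt (∑ i, (∑ k ∈ s, g k i) ^ 2)
      = ‖(WithLp.linearEquiv 2 ℝ (Fin N → ℝ)).symm (∑ k ∈ s, g k)‖ := by
        rw [← h1, nrm_eq]
    _ = ‖∑ k ∈ s, (WithLp.linearEquiv 2 ℝ (Fin N → ℝ)).symm (g k)‖ := by
        rw [map_sum]
    _ ≤ ∑ k ∈ s, ‖(WithLp.linearEquiv 2 ℝ (Fin N → ℝ)).symm (g k)‖ := norm_sum_le _ _
    _ = ∑ k ∈ s, Real.sqrt (∑ i, (g k i) ^ 2) := by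
        refine Finset.sum_congr rfl fun k _ => (nrm_eq (g k)).symm

lemma nrm_add_le {N : ℕ} (v w : Fin N → ℝ) :
    Real.sqrt (∑ i, (v i + w i) ^ 2) ≤ Real.sqrt (∑ i, v i ^ 2) + Real.sqrt (∑ i, w i ^ 2) := by
  rw [nrm_eq, nrm_eq v, nrm_eq w]
  have : (WithLp.linearEquiv 2 ℝ (Fin N → ℝ)).symm (fun i => v i + w i)
      = (WithLp.linearEquiv 2 ℝ (Fin N → ℝ)).symm v + (WithLp.linearEquiv 2 ℝ (Fin N → ℝ)).symm w := by
    exact map_add _ v w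
  rw [this]
  exact norm_add_le _ _

lemma abs_le_nrm {N : ℕ} (v : Fin N → ℝ) (i : Fin N) :
    |v i| ≤ Real.sqrt (∑ k, v k ^ 2) := by
  rw [← Real.sqrt_sq_eq_abs]
  exact Real.sqrt_le_sqrt (Finset.single_le_sum (fun k _ => sq_nonneg (v k)) (Finset.mem_univ i))

lemma cov_bound {N : ℕ} (hN : 0 < N) (σ w d : Fin N → ℝ)
    (hσ0 : ∀ i, 0 ≤ σ i) (hσ1 : ∑ i, σ i = 1) {R : ℝ} (hw : ∀ i, |w i| ≤ R) :
    |(∑ i, σ i * (w i * d i)) - (∑ i, σ i * w i) * (∑ i, σ i * d i)| ≤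
      R * Real.sqrt (∑ i, d i ^ 2) := by
  have hR : 0 ≤ R := le_trans (abs_nonneg _) (hw ⟨0, hN⟩)
  set m : ℝ := ∑ i, σ i * d i with hm
  have hσle1 : ∀ i, σ i ≤ 1 := by
    intro i
    rw [← hσ1]
    exact Finset.single_le_sum (fun k _ => hσ0 k) (Finset.mem_univ i)
  have h1 : (∑ i, σ i * (w i * d i)) - (∑ i, σ i * w i) * m
      = ∑ i, σ i * w i * (d i - m) := by
    rw [Finset.sum_mul]
    rw [← Finset.sum_sub_distrib]
    exact Finset.sum_congr rfl fun i _ => by ring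
  rw [h1]
  -- step 1: abs sum ≤ R * ∑ σ |d - m|
  have h2 : |∑ i, σ i * w i * (d i - m)| ≤ R * ∑ i, σ i * |d i - m| := by
    calc |∑ i, σ i * w i * (d i - m)| ≤ ∑ i, |σ i * w i * (d i - m)| :=
          Finset.abs_sum_le_sum_abs _ _
      _ ≤ ∑ i, R * (σ i * |d i - m|) := by
          refine Finset.sum_le_sum fun i _ => ?_
          rw [abs_mul, abs_mul, abs_of_nonneg (hσ0 i)]
          calc σ i * |w i| * |d i - m| ≤ σ i * R * |d i - m| :=
                mul_le_mul_of_nonneg_right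
                  (mul_le_mul_of_nonneg_left (hw i) (hσ0 i)) (abs_nonneg _)
            _ = R * (σ i * |d i - m|) := by ring
      _ = R * ∑ i, σ i * |d i - m| := by rw [← Finset.mul_sum]
  -- step 2: Cauchy-Schwarz: ∑ σ |d-m| ≤ sqrt (∑ σ (d-m)^2)
  have h3 : ∑ i, σ i * |d i - m| ≤ Real.sqrt (∑ i, σ i * (d i - m) ^ 2) := by
    have hcs := Finset.sum_mul_sq_le_sq_mul_sq Finset.univ
      (fun i => Real.sqrt (σ i)) (fun i => Real.sqrt (σ i) * |d i - m|)
    have hterm : ∀ i : Fin N, Real.sqrt (σ i) * (Real.sqrt (σ i) * |d i - m|)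
        = σ i * |d i - m| := by
      intro i
      rw [← mul_assoc, Real.mul_self_sqrt (hσ0 i)]
    have hterm2 : ∀ i : Fin N, (Real.sqrt (σ i)) ^ 2 = σ i := fun i => Real.sq_sqrt (hσ0 i)
    have hterm3 : ∀ i : Fin N, (Real.sqrt (σ i) * |d i - m|) ^ 2 = σ i * (d i - m) ^ 2 := by
      intro i
      rw [mul_pow, Real.sq_sqrt (hσ0 i), sq_abs]
    rw [Finset.sum_congr rfl (fun i _ => hterm i),
        Finset.sum_congr rfl (fun i _ => hterm2 i),
        Finset.sum_congr rfl (fun i _ => hterm3 i), hσ1, one_mul] at hcs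
    have hnn : 0 ≤ ∑ i, σ i * |d i - m| :=
      Finset.sum_nonneg fun i _ => mul_nonneg (hσ0 i) (abs_nonneg _)
    have := Real.sqrt_le_sqrt hcs
    rwa [Real.sqrt_sq hnn] at this
  -- step 3: ∑ σ (d-m)^2 = ∑ σ d^2 - m^2 ≤ ∑ d^2
  have h4 : ∑ i, σ i * (d i - m) ^ 2 ≤ ∑ i, d i ^ 2 := by
    have hexp : ∑ i, σ i * (d i - m) ^ 2
        = (∑ i, σ i * d i ^ 2) - 2 * m * (∑ i, σ i * d i) + m ^ 2 * (∑ i, σ i) := by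
      have hterm : ∀ i : Fin N, σ i * (d i - m) ^ 2
          = σ i * d i ^ 2 - 2 * m * (σ i * d i) + m ^ 2 * σ i := fun i => by ring
      rw [Finset.sum_congr rfl (fun i _ => hterm i), Finset.sum_add_distrib,
        Finset.sum_sub_distrib, ← Finset.mul_sum, ← Finset.mul_sum]
    rw [hexp, hσ1, ← hm, mul_one]
    have : (∑ i, σ i * d i ^ 2) ≤ ∑ i, d i ^ 2 :=
      Finset.sum_le_sum fun i _ => by nlinarith [hσle1 i, hσ0 i, sq_nonneg (d i)]
    nlinarith [sq_nonneg m]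
  calc |∑ i, σ i * w i * (d i - m)| ≤ R * ∑ i, σ i * |d i - m| := h2
    _ ≤ R * Real.sqrt (∑ i, σ i * (d i - m) ^ 2) := by
        exact mul_le_mul_of_nonneg_left h3 hR
    _ ≤ R * Real.sqrt (∑ i, d i ^ 2) := by
        exact mul_le_mul_of_nonneg_left (Real.sqrt_le_sqrt h4) hR


lemma softmax_inner_lip {N : ℕ} (hN : 0 < N) {R : ℝ} (w : Fin N → ℝ)
    (hw : ∀ i, |w i| ≤ R) (u v : Fin N → ℝ) :
    |(∑ i, softmax v i * w i) - ∑ i, softmax u i * w i| ≤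
      R * Real.sqrt (∑ i, (v i - u i) ^ 2) := by
  haveI : Nonempty (Fin N) := Fin.pos_iff_nonempty.mp hN
  set d : Fin N → ℝ := fun i => v i - u i with hd
  set A : ℝ → ℝ := fun t => ∑ i, w i * Real.exp (u i + t * d i) with hA
  set B : ℝ → ℝ := fun t => ∑ i, Real.exp (u i + t * d i) with hB
  have hBpos : ∀ t : ℝ, 0 < B t := fun t =>
    Finset.sum_pos (fun i _ => Real.exp_pos _) Finset.univ_nonempty
  set g : ℝ → ℝ := fun t => A t / B t with hg
  set D : ℝ → ℝ := fun t =>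
    ((∑ i, w i * (Real.exp (u i + t * d i) * d i)) * B t -
      A t * (∑ i, Real.exp (u i + t * d i) * d i)) / (B t) ^ 2 with hD
  have hderiv : ∀ t : ℝ, HasDerivAt g (D t) t := by
    intro t
    have hlin : ∀ i : Fin N, HasDerivAt (fun s : ℝ => u i + s * d i) (d i) t := by
      intro i
      simpa using ((hasDerivAt_id t).mul_const (d i)).const_add (u i)
    have hAd : HasDerivAt A (∑ i, w i * (Real.exp (u i + t * d i) * d i)) t :=
      HasDerivAt.fun_sum fun i _ => ((hlin i).exp).const_mul (w i)
    have hBd : HasDerivAt B (∑ i, Real.exp (u i + t * d i) * d i) t :=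
      HasDerivAt.fun_sum fun i _ => (hlin i).exp
    exact hAd.div hBd (hBpos t).ne'
  -- bound on the derivative
  have hDb : ∀ t : ℝ, |D t| ≤ R * Real.sqrt (∑ i, d i ^ 2) := by
    intro t
    set σ : Fin N → ℝ := fun i => Real.exp (u i + t * d i) / B t with hσ
    have hσ0 : ∀ i, 0 ≤ σ i := fun i => div_nonneg (Real.exp_pos _).le (hBpos t).le
    have hσ1 : ∑ i, σ i = 1 := by
      rw [← Finset.sum_div, div_self (hBpos t).ne']
    have hrw : D t = (∑ i, σ i * (w i * d i)) - (∑ i, σ i * w i) * (∑ i, σ i * d i) := by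
      have hBne := (hBpos t).ne'
      have e1 : ∑ i, σ i * (w i * d i)
          = (∑ i, w i * (Real.exp (u i + t * d i) * d i)) / B t := by
        rw [Finset.sum_div]
        exact Finset.sum_congr rfl fun i _ => by simp only [hσ]; ring
      have e2 : ∑ i, σ i * w i = A t / B t := by
        rw [hA, Finset.sum_div]
        exact Finset.sum_congr rfl fun i _ => by simp only [hσ]; ring
      have e3 : ∑ i, σ i * d i = (∑ i, Real.exp (u i + t * d i) * d i) / B t := by
        rw [Finset.sum_div]
        exact Finset.sum_congr rfl fun i _ => by simp only [hσ]; ring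
      rw [e1, e2, e3, hD]
      field_simp
    rw [hrw]
    exact cov_bound hN σ w d hσ0 hσ1 hw
  -- MVT
  have hcont : ContinuousOn g (Set.Icc 0 1) :=
    (fun t _ => ((hderiv t).differentiableAt.continuousAt).continuousWithinAt)
  obtain ⟨ξ, -, hξ⟩ := exists_hasDerivAt_eq_slope g D zero_lt_one hcont
    (fun x _ => hderiv x)
  have hslope : g 1 - g 0 = D ξ := by
    rw [hξ]; norm_num
  have hg0 : g 0 = ∑ i, softmax u i * w i := by
    simp only [hg, hA, hB, softmax, zero_mul, add_zero]
    rw [Finset.sum_div]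
    exact Finset.sum_congr rfl fun i _ => by ring
  have hg1 : g 1 = ∑ i, softmax v i * w i := by
    simp only [hg, hA, hB, softmax, one_mul, hd]
    have hv : ∀ i : Fin N, u i + (v i - u i) = v i := fun i => by ring
    simp only [hv]
    rw [Finset.sum_div]
    exact Finset.sum_congr rfl fun i _ => by ring
  rw [← hg1, ← hg0, hslope]
  simpa [hd] using hDb ξ

lemma util_lip {N : ℕ} (hN : 0 < N) {τ : ℝ} (hτ : 0 < τ) (π₀ cc yy : Fin N → ℝ) {R : ℝ}
    (hw : ∀ i, |cc i - yy i| ≤ R) (z z' : Fin N → ℝ) :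
    util τ π₀ cc yy z - util τ π₀ cc yy z' ≤
      (R / τ) * Real.sqrt (∑ i, (z i - z' i) ^ 2) := by
  have h := softmax_inner_lip hN (fun i => cc i - yy i) hw
    (fun i => Real.log (π₀ i) + (z' i + yy i) / τ)
    (fun i => Real.log (π₀ i) + (z i + yy i) / τ)
  have hdiff : ∀ i : Fin N,
      ((Real.log (π₀ i) + (z i + yy i) / τ) - (Real.log (π₀ i) + (z' i + yy i) / τ)) ^ 2
        = (z i - z' i) ^ 2 / τ ^ 2 := by
    intro i
    field_simp
    ring
  rw [Finset.sum_congr rfl (fun i _ => hdiff i), ← Finset.sum_div,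
    Real.sqrt_div (Finset.sum_nonneg fun i _ => sq_nonneg _), Real.sqrt_sq hτ.le] at h
  have hgoal := (le_abs_self _).trans h
  calc util τ π₀ cc yy z - util τ π₀ cc yy z'
      ≤ R * (Real.sqrt (∑ i, (z i - z' i) ^ 2) / τ) := hgoal
    _ = (R / τ) * Real.sqrt (∑ i, (z i - z' i) ^ 2) := by ring

/-- Regret bound for the exact-best-response Jacobi dynamics of the common-agency
alignment game: each principal's cumulative regret against any fixed comparator in
its box is bounded by `2(R/τ+1)(J−1) Σ_t (a_t + a_{t−1})`. -/
theorem stmt_14 (N J : ℕ) (hN : 1 ≤ N) (hJ : 2 ≤ J) (τ : ℝ) (hτ : 0 < τ)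
    (π₀ : Fin N → ℝ) (hπ₀pos : ∀ i, 0 < π₀ i) (hπ₀sum : ∑ i, π₀ i = 1)
    (c : Fin J → Fin N → ℝ) (R : ℝ)
    (hc0 : ∀ j i, 0 ≤ c j i) (hcR : ∀ j, Real.sqrt (∑ i, (c j i) ^ 2) ≤ R)
    (y : ℕ → Fin J → Fin N → ℝ)
    (hybox : ∀ t j i, 0 ≤ y t j i ∧ y t j i ≤ c j i)
    (Ym : ℕ → Fin J → Fin N → ℝ)
    (hYm : ∀ t j, Ym t j = ∑ k ∈ Finset.univ.erase j, y t k)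
    (hbr : ∀ t : ℕ, 1 ≤ t → ∀ j, ∀ ybar : Fin N → ℝ,
      (∀ i, 0 ≤ ybar i ∧ ybar i ≤ c j i) →
      util τ π₀ (c j) ybar (Ym (t - 1) j) ≤ util τ π₀ (c j) (y t j) (Ym (t - 1) j))
    (ystar : Fin J → Fin N → ℝ)
    (hystar : ∀ j i, 0 ≤ ystar j i ∧ ystar j i ≤ c j i)
    (a : ℕ → ℝ)
    (ha : ∀ t, a t = ⨆ j, Real.sqrt (∑ i, (y t j i - ystar j i) ^ 2)) :
    ∀ T : ℕ, ∀ j, ∀ ybar : Fin N → ℝ, (∀ i, 0 ≤ ybar i ∧ ybar i ≤ c j i) →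
      ∑ t ∈ Finset.Icc 1 T,
          (util τ π₀ (c j) ybar (Ym t j) - util τ π₀ (c j) (y t j) (Ym t j)) ≤
        2 * (R / τ + 1) * ((J : ℝ) - 1) * ∑ t ∈ Finset.Icc 1 T, (a t + a (t - 1)) := by
  intro T j ybar hybar
  haveI : Nonempty (Fin J) := ⟨⟨0, by omega⟩⟩
  have hN0 : 0 < N := hN
  have hJR : (0 : ℝ) ≤ (J : ℝ) - 1 := by
    have : (2 : ℝ) ≤ (J : ℝ) := by exact_mod_cast hJ
    linarith
  have hR0 : 0 ≤ R := le_trans (Real.sqrt_nonneg _) (hcR j)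
  have hL : 0 ≤ R / τ := div_nonneg hR0 hτ.le
  have haub : ∀ t k, Real.sqrt (∑ i, (y t k i - ystar k i) ^ 2) ≤ a t := by
    intro t k
    rw [ha t]
    exact le_ciSup (f := fun k : Fin J => Real.sqrt (∑ i, (y t k i - ystar k i) ^ 2))
      (Set.Finite.bddAbove (Set.finite_range _)) k
  have ha0 : ∀ t, 0 ≤ a t := fun t =>
    le_trans (Real.sqrt_nonneg _) (haub t (Classical.arbitrary _))
  have hsym : ∀ (p q : Fin N → ℝ), (∑ i, (p i - q i) ^ 2) = ∑ i, (q i - p i) ^ 2 :=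
    fun p q => Finset.sum_congr rfl fun i _ => by ring
  have hcomp : ∀ i, c j i ≤ R := fun i =>
    le_trans (le_trans (le_abs_self _) (abs_le_nrm (c j) i)) (hcR j)
  have hwbox : ∀ (b : Fin N → ℝ), (∀ i, 0 ≤ b i ∧ b i ≤ c j i) → ∀ i, |c j i - b i| ≤ R := by
    intro b hb i
    rw [abs_of_nonneg (by linarith [(hb i).2])]
    linarith [(hb i).1, hcomp i]
  -- per-step bound
  have hstep : ∀ t : ℕ, 1 ≤ t →
      util τ π₀ (c j) ybar (Ym t j) - util τ π₀ (c j) (y t j) (Ym t j) ≤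
        2 * (R / τ + 1) * ((J : ℝ) - 1) * (a t + a (t - 1)) := by
    intro t ht
    set S : ℝ := Real.sqrt (∑ i, (Ym t j i - Ym (t - 1) j i) ^ 2) with hSdef
    have key1 := util_lip hN0 hτ π₀ (c j) ybar (hwbox ybar hybar) (Ym t j) (Ym (t - 1) j)
    have key2 := util_lip hN0 hτ π₀ (c j) (y t j) (hwbox (y t j) (hybox t j))
      (Ym (t - 1) j) (Ym t j)
    rw [hsym (Ym (t - 1) j) (Ym t j)] at key2
    have hbr' := hbr t ht j ybar hybar
    -- bound S
    have hpt : ∀ i, Ym t j i - Ym (t - 1) j i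
        = ∑ k ∈ Finset.univ.erase j, (y t k i - y (t - 1) k i) := by
      intro i
      rw [hYm t j, hYm (t - 1) j, Finset.sum_apply, Finset.sum_apply,
        ← Finset.sum_sub_distrib]
    have hS : S ≤ ((J : ℝ) - 1) * (a t + a (t - 1)) := by
      have hcard : ((Finset.univ.erase j).card : ℝ) = (J : ℝ) - 1 := by
        rw [Finset.card_erase_of_mem (Finset.mem_univ j)]
        simp only [Finset.card_univ, Fintype.card_fin]
        have h1 : 1 ≤ J := by omega
        push_cast [Nat.cast_sub h1]
        ring
      calc S = Real.sqrt (∑ i, (∑ k ∈ Finset.univ.erase j, (y t k i - y (t - 1) k i)) ^ 2) := by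
            rw [hSdef]
            congr 1
            exact Finset.sum_congr rfl fun i _ => by rw [hpt i]
        _ ≤ ∑ k ∈ Finset.univ.erase j,
              Real.sqrt (∑ i, (y t k i - y (t - 1) k i) ^ 2) :=
            nrm_sum_le (Finset.univ.erase j) (fun k i => y t k i - y (t - 1) k i)
        _ ≤ ∑ k ∈ Finset.univ.erase j, (a t + a (t - 1)) := by
            refine Finset.sum_le_sum fun k _ => ?_
            have hdecomp : ∀ i, y t k i - y (t - 1) k i
                = (y t k i - ystar k i) + (ystar k i - y (t - 1) k i) := fun i => by ring
            calc Real.sqrt (∑ i, (y t k i - y (t - 1) k i) ^ 2)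
                = Real.sqrt (∑ i, ((y t k i - ystar k i) + (ystar k i - y (t - 1) k i)) ^ 2) := by
                  congr 1
                  exact Finset.sum_congr rfl fun i _ => by rw [hdecomp i]
              _ ≤ Real.sqrt (∑ i, (y t k i - ystar k i) ^ 2)
                    + Real.sqrt (∑ i, (ystar k i - y (t - 1) k i) ^ 2) :=
                  nrm_add_le _ _
              _ ≤ a t + a (t - 1) := by
                  have h1 := haub t k
                  have h2 := haub (t - 1) k
                  rw [hsym (ystar k) (y (t - 1) k)]
                  exact add_le_add h1 h2
        _ = ((J : ℝ) - 1) * (a t + a (t - 1)) := by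
            rw [Finset.sum_const, nsmul_eq_mul, hcard]
    have hS0 : 0 ≤ S := Real.sqrt_nonneg _
    have hprod : 0 ≤ ((J : ℝ) - 1) * (a t + a (t - 1)) :=
      mul_nonneg hJR (add_nonneg (ha0 t) (ha0 (t - 1)))
    have h1 : (R / τ) * S ≤ (R / τ) * (((J : ℝ) - 1) * (a t + a (t - 1))) :=
      mul_le_mul_of_nonneg_left hS hL
    have h2 : (R / τ) * (((J : ℝ) - 1) * (a t + a (t - 1)))
        ≤ (R / τ + 1) * (((J : ℝ) - 1) * (a t + a (t - 1))) :=
      mul_le_mul_of_nonneg_right (by linarith) hprod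
    nlinarith [key1, key2, hbr']
  calc ∑ t ∈ Finset.Icc 1 T,
        (util τ π₀ (c j) ybar (Ym t j) - util τ π₀ (c j) (y t j) (Ym t j))
      ≤ ∑ t ∈ Finset.Icc 1 T, 2 * (R / τ + 1) * ((J : ℝ) - 1) * (a t + a (t - 1)) :=
        Finset.sum_le_sum fun t ht => hstep t (Finset.mem_Icc.mp ht).1
    _ = 2 * (R / τ + 1) * ((J : ℝ) - 1) * ∑ t ∈ Finset.Icc 1 T, (a t + a (t - 1)) := by
        rw [Finset.mul_sum]
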